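/- Let n have exactly k ones in its binary expansion, let E = {e₁ < e₂ < ... < e_{2^k-1}} be the set of essential elements of [n-1], and let S = {e_{i₁},...,e_{iₘ}} ⊆ E with index set Ŝ = {i₁,...,iₘ} ⊆ [2^k - 1]. Then β_n(S) ≡ β_{2^k-1}(Ŝ) (mod 2). -/

import Mathlib

open Finset

/-- The descent set of a permutation of `{1,…,n}` (written as a permutation of `Fin n`),
as a subset of `[n-1] = {1,…,n-1}`: `i` is a descent if `π_i > π_{i+1}` (1-indexed). -/
def descSet (n : ℕ) (π : Equiv.Perm (Fin n)) : Finset ℕ :=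
  (Finset.Icc 1 (n - 1)).filter (fun i =>
    ∃ h : i < n, π ⟨i, h⟩ < π ⟨i - 1, by omega⟩)

/-- `β_n(S)`: the number of permutations of `{1,…,n}` with descent set exactly `S`. -/
def descBeta (n : ℕ) (S : Finset ℕ) : ℕ :=
  (Finset.univ.filter (fun π : Equiv.Perm (Fin n) => descSet n π = S)).card

/-- `α_n(S)`: the number of permutations of `{1,…,n}` with descent set contained in `S`. -/
def descAlpha (n : ℕ) (S : Finset ℕ) : ℕ :=
  (Finset.univ.filter (fun π : Equiv.Perm (Fin n) => descSet n π ⊆ S)).card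

def Essential (n s : ℕ) : Prop := 0 < s ∧ s < n ∧ s &&& n = s

instance (n : ℕ) : DecidablePred (Essential n) := fun s => by
  unfold Essential; infer_instance

namespace DescParity


lemma sub_iff_testBit {s n : ℕ} : s &&& n = s ↔ ∀ i, s.testBit i = true → n.testBit i = true := by
  constructor
  · intro h i hi
    have h2 := congrArg (fun x => Nat.testBit x i) h
    simp only [Nat.testBit_land, hi, Bool.true_and] at h2
    exact h2
  · intro h
    apply Nat.eq_of_testBit_eq
    intro i
    rw [Nat.testBit_land]
    cases hs : s.testBit i
    · simp
    · simp [h i hs]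

lemma sub_iff_parts {s n : ℕ} : s &&& n = s ↔ (s / 2) &&& (n / 2) = s / 2 ∧ s % 2 ≤ n % 2 := by
  rw [sub_iff_testBit, sub_iff_testBit]
  constructor
  · intro h
    refine ⟨fun i hi => ?_, ?_⟩
    · rw [Nat.testBit_div_two] at hi ⊢; exact h _ hi
    · have h0 := h 0
      simp only [Nat.testBit_zero, decide_eq_true_eq] at h0
      omega
  · rintro ⟨h1, h2⟩ i hi
    cases i with
    | zero =>
      simp only [Nat.testBit_zero, decide_eq_true_eq] at hi ⊢
      omega
    | succ j =>
      rw [Nat.testBit_succ] at hi ⊢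
      exact h1 j hi

lemma sub_trans {a b c : ℕ} (h1 : a &&& b = a) (h2 : b &&& c = b) : a &&& c = a := by
  calc a &&& c = (a &&& b) &&& c := by rw [h1]
  _ = a &&& (b &&& c) := Nat.land_assoc a b c
  _ = a &&& b := by rw [h2]
  _ = a := h1

lemma sub_le {s n : ℕ} (h : s &&& n = s) : s ≤ n := h ▸ Nat.and_le_right

lemma land_div_two (s t : ℕ) : (s &&& t) / 2 = s / 2 &&& t / 2 :=
  Nat.eq_of_testBit_eq fun i => by simp [Nat.testBit_div_two, Nat.testBit_land]

lemma land_mod_two (s t : ℕ) : (s &&& t) % 2 = s % 2 * (t % 2) := by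
  have h := Nat.testBit_land s t 0
  simp only [Nat.testBit_zero] at h
  rcases Nat.mod_two_eq_zero_or_one s with h1 | h1 <;>
    rcases Nat.mod_two_eq_zero_or_one t with h2 | h2 <;>
    rcases Nat.mod_two_eq_zero_or_one (s &&& t) with h3 | h3 <;>
    simp [h1, h2, h3] at h ⊢

lemma land_two_mul_add {a b a' b' : ℕ} (hb : b ≤ 1) (hb' : b' ≤ 1) :
    (2 * a + b) &&& (2 * a' + b') = 2 * (a &&& a') + b * b' := by
  have hd : ((2 * a + b) &&& (2 * a' + b')) = 2 * (((2 * a + b) &&& (2 * a' + b')) / 2) +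
      ((2 * a + b) &&& (2 * a' + b')) % 2 := by omega
  rw [hd, land_div_two, land_mod_two]
  have h1 : (2 * a + b) / 2 = a := by omega
  have h2 : (2 * a' + b') / 2 = a' := by omega
  have h3 : (2 * a + b) % 2 = b := by omega
  have h4 : (2 * a' + b') % 2 = b' := by omega
  rw [h1, h2, h3, h4]

/-- Compression of a submask `s` of `n` onto the bit positions of `n`. -/
def cmprs (n s : ℕ) : ℕ :=
  if h : n = 0 then 0
  else if n % 2 = 1 then 2 * cmprs (n / 2) (s / 2) + s % 2
  else cmprs (n / 2) (s / 2)
termination_by n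
decreasing_by all_goals exact Nat.div_lt_self (Nat.pos_of_ne_zero h) one_lt_two

lemma cmprs_zero_left (s : ℕ) : cmprs 0 s = 0 := by rw [cmprs]; simp

lemma cmprs_odd {n : ℕ} (hn : n ≠ 0) (h1 : n % 2 = 1) (s : ℕ) :
    cmprs n s = 2 * cmprs (n / 2) (s / 2) + s % 2 := by
  rw [cmprs]; simp [hn, h1]

lemma cmprs_even {n : ℕ} (hn : n ≠ 0) (h1 : n % 2 ≠ 1) (s : ℕ) :
    cmprs n s = cmprs (n / 2) (s / 2) := by
  rw [cmprs]; simp [hn, h1]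

lemma cmprs_zero_right : ∀ n, cmprs n 0 = 0 := by
  intro n
  induction n using Nat.strong_induction_on with
  | _ n ih =>
    rcases eq_or_ne n 0 with rfl | hn
    · exact cmprs_zero_left 0
    have hd : n / 2 < n := Nat.div_lt_self (Nat.pos_of_ne_zero hn) one_lt_two
    rcases Nat.mod_two_eq_zero_or_one n with h1 | h1
    · rw [cmprs_even hn (by omega)]; simpa using ih _ hd
    · rw [cmprs_odd hn h1]; simpa using ih _ hd

lemma cmprs_self : ∀ n, cmprs n n = 2 ^ ((Nat.bits n).count true) - 1 := by
  intro n
  induction n using Nat.strong_induction_on with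
  | _ n ih =>
    rcases eq_or_ne n 0 with rfl | hn
    · simp [cmprs_zero_left]
    have hd : n / 2 < n := Nat.div_lt_self (Nat.pos_of_ne_zero hn) one_lt_two
    have hbits : (Nat.bits n).count true = n % 2 + (Nat.bits (n / 2)).count true := by
      conv_lhs => rw [← Nat.bit_bodd_div2 n]
      rw [Nat.bits_append_bit _ _ (fun h => by
        cases hb : n.bodd with
        | true => rfl
        | false =>
          exfalso; apply hn
          have h5 := Nat.bit_bodd_div2 n
          rw [hb, h] at h5
          simpa [Nat.bit_val] using h5.symm)]
      rw [Nat.div2_val, Nat.mod_two_of_bodd]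
      cases n.bodd <;> simp [List.count_cons] <;> omega
    have hpos : 1 ≤ 2 ^ ((Nat.bits (n / 2)).count true) := Nat.one_le_two_pow
    rcases Nat.mod_two_eq_zero_or_one n with h1 | h1
    · rw [cmprs_even hn (by omega), ih _ hd, hbits, h1, Nat.zero_add]
    · rw [cmprs_odd hn h1, ih _ hd, hbits, h1, pow_add]
      ring_nf
      omega

lemma cmprs_lt_iff : ∀ n s t, s &&& n = s → t &&& n = t → (cmprs n s < cmprs n t ↔ s < t) := by
  intro n
  induction n using Nat.strong_induction_on with
  | _ n ih =>
    intro s t hs ht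
    rcases eq_or_ne n 0 with rfl | hn
    · rw [Nat.and_zero] at hs ht
      simp [← hs, ← ht]
    have hd : n / 2 < n := Nat.div_lt_self (Nat.pos_of_ne_zero hn) one_lt_two
    have hs' := (sub_iff_parts.mp hs).1
    have ht' := (sub_iff_parts.mp ht).1
    have h1 := ih _ hd _ _ hs' ht'
    have h2 := ih _ hd _ _ ht' hs'
    rcases Nat.mod_two_eq_zero_or_one n with hpar | hpar
    · have hsm := (sub_iff_parts.mp hs).2
      have htm := (sub_iff_parts.mp ht).2
      rw [cmprs_even hn (by omega), cmprs_even hn (by omega)]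
      omega
    · rw [cmprs_odd hn hpar, cmprs_odd hn hpar]
      omega

lemma cmprs_inj {n s t : ℕ} (hs : s &&& n = s) (ht : t &&& n = t)
    (h : cmprs n s = cmprs n t) : s = t := by
  have h1 := cmprs_lt_iff n s t hs ht
  have h2 := cmprs_lt_iff n t s ht hs
  omega

lemma cmprs_surj : ∀ n j, j ≤ cmprs n n → ∃ s, s &&& n = s ∧ cmprs n s = j := by
  intro n
  induction n using Nat.strong_induction_on with
  | _ n ih =>
    intro j hj
    rcases eq_or_ne n 0 with rfl | hn
    · have hj0 : j = 0 := by simpa [cmprs_zero_left] using hj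
      exact ⟨0, Nat.zero_and 0, by rw [hj0]; exact cmprs_zero_left 0⟩
    have hd : n / 2 < n := Nat.div_lt_self (Nat.pos_of_ne_zero hn) one_lt_two
    have hnn' : (n / 2) &&& (n / 2) = n / 2 := Nat.and_self _
    rcases Nat.mod_two_eq_zero_or_one n with hpar | hpar
    · rw [cmprs_even hn (by omega)] at hj
      obtain ⟨s', hs', hc⟩ := ih _ hd j hj
      refine ⟨2 * s', ?_, ?_⟩
      · rw [sub_iff_parts]
        constructor
        · simpa using hs'
        · omega
      · rw [cmprs_even hn (by omega)]
        simpa using hc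
    · rw [cmprs_odd hn hpar] at hj
      obtain ⟨s', hs', hc⟩ := ih _ hd (j / 2) (by omega)
      refine ⟨2 * s' + j % 2, ?_, ?_⟩
      · rw [sub_iff_parts]
        constructor
        · have : (2 * s' + j % 2) / 2 = s' := by omega
          rw [this]; exact hs'
        · omega
      · rw [cmprs_odd hn hpar]
        have h2 : (2 * s' + j % 2) / 2 = s' := by omega
        have h3 : (2 * s' + j % 2) % 2 = j % 2 := by omega
        rw [h2, h3, hc]
        omega

lemma cmprs_land : ∀ n s t, s &&& n = s → t &&& n = t →
    cmprs n (s &&& t) = cmprs n s &&& cmprs n t := by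
  intro n
  induction n using Nat.strong_induction_on with
  | _ n ih =>
    intro s t hs ht
    rcases eq_or_ne n 0 with rfl | hn
    · rw [Nat.and_zero] at hs ht
      rw [← hs, ← ht]
      simp [cmprs_zero_right]
    have hd : n / 2 < n := Nat.div_lt_self (Nat.pos_of_ne_zero hn) one_lt_two
    have hs' := (sub_iff_parts.mp hs).1
    have ht' := (sub_iff_parts.mp ht).1
    have key := ih _ hd _ _ hs' ht'
    rcases Nat.mod_two_eq_zero_or_one n with hpar | hpar
    · rw [cmprs_even hn (by omega), cmprs_even hn (by omega), cmprs_even hn (by omega),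
        land_div_two, key]
    · have hsm := (sub_iff_parts.mp hs).2
      have htm := (sub_iff_parts.mp ht).2
      rw [cmprs_odd hn hpar, cmprs_odd hn hpar, cmprs_odd hn hpar, land_div_two, key,
        land_mod_two, land_two_mul_add (by omega) (by omega)]

lemma lt_two_pow_land {t k : ℕ} (h : t < 2 ^ k) : t &&& (2 ^ k - 1) = t := by
  rw [sub_iff_testBit]
  intro i hi
  rw [Nat.testBit_two_pow_sub_one]
  simp only [decide_eq_true_eq]
  by_contra hik
  have h2 : 2 ^ k ≤ 2 ^ i := Nat.pow_le_pow_right (by omega) (by omega)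
  have h3 : t.testBit i = false := Nat.testBit_lt_two_pow (by omega)
  rw [h3] at hi
  exact Bool.false_ne_true hi


lemma mul_mod_two_eq_one {a b : ℕ} : a * b % 2 = 1 ↔ a % 2 = 1 ∧ b % 2 = 1 := by
  rw [Nat.mul_mod]
  rcases Nat.mod_two_eq_zero_or_one a with h1 | h1 <;>
    rcases Nat.mod_two_eq_zero_or_one b with h2 | h2 <;> simp [h1, h2]

lemma choose_odd_iff : ∀ n k : ℕ, n.choose k % 2 = 1 ↔ k &&& n = k := by
  have inst : Fact (Nat.Prime 2) := ⟨Nat.prime_two⟩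
  intro n
  induction n using Nat.strong_induction_on with
  | _ n ih =>
    intro k
    rcases eq_or_ne n 0 with rfl | hn
    · cases k with
      | zero => simp
      | succ j =>
        simp only [Nat.choose_zero_succ, Nat.zero_mod, Nat.and_zero]
        omega
    have hd : n / 2 < n := Nat.div_lt_self (Nat.pos_of_ne_zero hn) one_lt_two
    have H : n.choose k % 2 = (n % 2).choose (k % 2) * ((n / 2).choose (k / 2)) % 2 :=
      Choose.choose_modEq_choose_mod_mul_choose_div_nat (p := 2)
    rw [H, mul_mod_two_eq_one, sub_iff_parts (s := k) (n := n), ih _ hd]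
    have hsmall : (n % 2).choose (k % 2) % 2 = 1 ↔ k % 2 ≤ n % 2 := by
      rcases Nat.mod_two_eq_zero_or_one n with h1 | h1 <;>
        rcases Nat.mod_two_eq_zero_or_one k with h2 | h2 <;> simp [h1, h2]
    rw [hsmall]
    tauto


lemma mem_descSet {n x : ℕ} {π : Equiv.Perm (Fin n)} :
    x ∈ descSet n π ↔ 1 ≤ x ∧ ∃ h : x < n, π ⟨x, h⟩ < π ⟨x - 1, by omega⟩ := by
  simp only [descSet, Finset.mem_filter, Finset.mem_Icc]
  constructor
  · rintro ⟨⟨h1, h2⟩, h, h3⟩; exact ⟨h1, h, h3⟩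
  · rintro ⟨h1, h, h3⟩; exact ⟨⟨h1, by omega⟩, h, h3⟩

def low (n m : ℕ) : Finset (Fin n) := Finset.univ.filter (fun i => (i : ℕ) < m)

lemma mem_low {n m : ℕ} {i : Fin n} : i ∈ low n m ↔ (i : ℕ) < m := by simp [low]

lemma card_low {n m : ℕ} (hmn : m ≤ n) : (low n m).card = m := by
  have h : low n m = (Finset.range m).attachFin
      (fun x hx => lt_of_lt_of_le (Finset.mem_range.1 hx) hmn) := by
    ext i; simp [low, Finset.mem_attachFin]
  rw [h, Finset.card_attachFin, Finset.card_range]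

def blk (n m : ℕ) (π : Equiv.Perm (Fin n)) : Finset (Fin n) := (low n m).image π

lemma card_blk {n m : ℕ} (hmn : m ≤ n) (π : Equiv.Perm (Fin n)) : (blk n m π).card = m := by
  rw [blk, Finset.card_image_of_injective _ π.injective, card_low hmn]

lemma mem_blk {n m : ℕ} {π : Equiv.Perm (Fin n)} {v : Fin n} :
    v ∈ blk n m π ↔ ((π.symm v : Fin n) : ℕ) < m := by
  simp only [blk, Finset.mem_image, mem_low]
  constructor
  · rintro ⟨i, hi, rfl⟩; simpa using hi
  · intro h; exact ⟨π.symm v, h, π.apply_symm_apply v⟩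

noncomputable def pat {n m : ℕ} (hmn : m ≤ n) (π : Equiv.Perm (Fin n)) : Equiv.Perm (Fin m) :=
  Equiv.ofBijective
    (fun i => ((blk n m π).orderIsoOfFin (card_blk hmn π)).symm
      ⟨π (Fin.castLE hmn i), mem_blk.mpr (by simpa using i.isLt)⟩)
    (Finite.injective_iff_bijective.mp (by
      intro a b hab
      have h2 := congrArg
        (fun x => (((blk n m π).orderIsoOfFin (card_blk hmn π)) x : Fin n)) hab
      simp only [OrderIso.apply_symm_apply] at h2
      exact Fin.castLE_injective hmn (π.injective h2)))

lemma pat_spec {n m : ℕ} (hmn : m ≤ n) (π : Equiv.Perm (Fin n)) (i : Fin m) :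
    (blk n m π).orderEmbOfFin (card_blk hmn π) (pat hmn π i) = π (Fin.castLE hmn i) := by
  rw [← Finset.coe_orderIsoOfFin_apply]
  show ((((blk n m π).orderIsoOfFin (card_blk hmn π))
    (((blk n m π).orderIsoOfFin (card_blk hmn π)).symm
      ⟨π (Fin.castLE hmn i), mem_blk.mpr (by simpa using i.isLt)⟩) : {x // x ∈ blk n m π}) : Fin n)
    = π (Fin.castLE hmn i)
  rw [OrderIso.apply_symm_apply]

lemma pat_lt_iff {n m : ℕ} (hmn : m ≤ n) (π : Equiv.Perm (Fin n)) (i j : Fin m) :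
    pat hmn π i < pat hmn π j ↔ π (Fin.castLE hmn i) < π (Fin.castLE hmn j) := by
  rw [← pat_spec hmn π i, ← pat_spec hmn π j]
  exact ((blk n m π).orderEmbOfFin (card_blk hmn π)).lt_iff_lt.symm

lemma compl_card {n m : ℕ} {A : Finset (Fin n)} (hA : A.card = m) : Aᶜ.card = n - m := by
  rw [Finset.card_compl, hA, Fintype.card_fin]

noncomputable def bld {n m : ℕ} (hmn : m ≤ n) (A : Finset (Fin n)) (hA : A.card = m)
    (σ : Equiv.Perm (Fin m)) : Equiv.Perm (Fin n) :=
  Equiv.ofBijective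
    (fun i => if h : (i : ℕ) < m then A.orderEmbOfFin hA (σ ⟨i, h⟩)
      else Aᶜ.orderEmbOfFin (compl_card hA) ⟨(i : ℕ) - m, by have := i.isLt; omega⟩)
    (Finite.injective_iff_bijective.mp (by
      intro a b hab
      simp only at hab
      by_cases ha : (a : ℕ) < m <;> by_cases hb : (b : ℕ) < m
      · rw [dif_pos ha, dif_pos hb] at hab
        have h2 := σ.injective ((A.orderEmbOfFin hA).injective hab)
        exact Fin.ext (by simpa [Fin.mk.injEq] using h2)
      · rw [dif_pos ha, dif_neg hb] at hab
        exfalso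
        have h1 := Finset.orderEmbOfFin_mem A hA (σ ⟨a, ha⟩)
        have h2 := Finset.orderEmbOfFin_mem Aᶜ (compl_card hA)
          ⟨(b : ℕ) - m, by have := b.isLt; omega⟩
        rw [hab] at h1
        exact (Finset.mem_compl.mp h2) h1
      · rw [dif_neg ha, dif_pos hb] at hab
        exfalso
        have h1 := Finset.orderEmbOfFin_mem A hA (σ ⟨b, hb⟩)
        have h2 := Finset.orderEmbOfFin_mem Aᶜ (compl_card hA)
          ⟨(a : ℕ) - m, by have := a.isLt; omega⟩
        rw [← hab] at h1
        exact (Finset.mem_compl.mp h2) h1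
      · rw [dif_neg ha, dif_neg hb] at hab
        have h2 := (Aᶜ.orderEmbOfFin (compl_card hA)).injective hab
        rw [Fin.mk.injEq] at h2
        exact Fin.ext (by omega)))

lemma bld_apply_lt {n m : ℕ} (hmn : m ≤ n) (A : Finset (Fin n)) (hA : A.card = m)
    (σ : Equiv.Perm (Fin m)) {i : Fin n} (h : (i : ℕ) < m) :
    bld hmn A hA σ i = A.orderEmbOfFin hA (σ ⟨i, h⟩) := by
  show (if h : (i : ℕ) < m then A.orderEmbOfFin hA (σ ⟨i, h⟩)
      else Aᶜ.orderEmbOfFin (compl_card hA) ⟨(i : ℕ) - m, by have := i.isLt; omega⟩) = _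
  rw [dif_pos h]

lemma bld_apply_ge {n m : ℕ} (hmn : m ≤ n) (A : Finset (Fin n)) (hA : A.card = m)
    (σ : Equiv.Perm (Fin m)) {i : Fin n} (h : ¬ (i : ℕ) < m) :
    bld hmn A hA σ i = Aᶜ.orderEmbOfFin (compl_card hA) ⟨(i : ℕ) - m,
      by have := i.isLt; omega⟩ := by
  show (if h : (i : ℕ) < m then A.orderEmbOfFin hA (σ ⟨i, h⟩)
      else Aᶜ.orderEmbOfFin (compl_card hA) ⟨(i : ℕ) - m, by have := i.isLt; omega⟩) = _
  rw [dif_neg h]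

lemma orderEmb_congr {α : Type*} [LinearOrder α] {s t : Finset α} {k : ℕ} (hst : s = t)
    (hs : s.card = k) (ht : t.card = k) (x : Fin k) :
    s.orderEmbOfFin hs x = t.orderEmbOfFin ht x := by subst hst; rfl

theorem alpha_empty (n : ℕ) : descAlpha n ∅ = 1 := by
  rw [descAlpha]
  have h : Finset.univ.filter (fun π : Equiv.Perm (Fin n) => descSet n π ⊆ ∅) = {1} := by
    ext π
    simp only [Finset.mem_filter, Finset.mem_univ, true_and, Finset.mem_singleton,
      Finset.subset_empty]
    constructor
    · intro h
      have hmono : StrictMono π := by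
        cases n with
        | zero => intro a b _; exact absurd a.2 (by omega)
        | succ n' =>
          rw [Fin.strictMono_iff_lt_succ]
          intro i
          by_contra hcon
          push_neg at hcon
          have hne2 : π i.succ ≠ π i.castSucc := fun he => by
            have h5 := π.injective he
            rw [Fin.ext_iff] at h5
            simp [Fin.val_succ] at h5
          have hdesc : ((i : ℕ) + 1) ∈ descSet (n' + 1) π :=
            mem_descSet.mpr ⟨by omega, by omega, lt_of_le_of_ne hcon hne2⟩
          rw [h] at hdesc
          exact absurd hdesc (Finset.notMem_empty _)
      have hrange : Set.range π = Set.range (id : Fin n → Fin n) := by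
        rw [π.surjective.range_eq, Set.range_id]
      have hfun := (hmono.range_inj strictMono_id).mp hrange
      exact Equiv.ext fun x => congrFun hfun x
    · rintro rfl
      ext x
      simp only [Finset.notMem_empty, iff_false]
      intro hx
      rw [mem_descSet] at hx
      obtain ⟨h1, h2, h3⟩ := hx
      simp only [Equiv.Perm.coe_one, id_eq] at h3
      rw [Fin.lt_def] at h3
      simp at h3
      omega
  rw [h, Finset.card_singleton]

theorem alpha_rec (n : ℕ) (T : Finset ℕ) (hT : T ⊆ Finset.Icc 1 (n - 1)) (hne : T.Nonempty) :
    descAlpha n T = n.choose (T.max' hne) * descAlpha (T.max' hne) (T.erase (T.max' hne)) := by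
  classical
  set m := T.max' hne with hm
  have hmT : m ∈ T := T.max'_mem hne
  have hIcc := hT hmT
  rw [Finset.mem_Icc] at hIcc
  have hm1 : 1 ≤ m := hIcc.1
  have hn2 : 2 ≤ n := by omega
  have hmn : m ≤ n := by omega
  have hmax : ∀ t ∈ T, t ≤ m := fun t ht => T.le_max' t ht
  have hcard : n.choose m * descAlpha m (T.erase m) =
      ((Finset.powersetCard m (Finset.univ : Finset (Fin n))) ×ˢ
        (Finset.univ.filter (fun σ : Equiv.Perm (Fin m) => descSet m σ ⊆ T.erase m))).card := by
    rw [Finset.card_product, Finset.card_powersetCard, Finset.card_univ, Fintype.card_fin,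
      descAlpha]
  rw [descAlpha, hcard]
  refine Finset.card_bij' (fun π _ => (blk n m π, pat hmn π))
    (fun p hp => bld hmn p.1 (Finset.mem_powersetCard_univ.mp (Finset.mem_product.mp hp).1)
      p.2) ?hi ?hj ?left ?right
  case hi =>
    intro π hπ
    rw [Finset.mem_product]
    constructor
    · exact Finset.mem_powersetCard_univ.mpr (card_blk hmn π)
    · rw [Finset.mem_filter]
      refine ⟨Finset.mem_univ _, ?_⟩
      intro x hx
      rw [mem_descSet] at hx
      obtain ⟨hx1, hxm, hlt⟩ := hx
      rw [pat_lt_iff] at hlt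
      have hxT : x ∈ T := by
        apply (Finset.mem_filter.mp hπ).2
        rw [mem_descSet]
        exact ⟨hx1, by omega, hlt⟩
      exact Finset.mem_erase.mpr ⟨by omega, hxT⟩
  case hj =>
    rintro ⟨A, σ⟩ hp
    have hA : A.card = m := Finset.mem_powersetCard_univ.mp (Finset.mem_product.mp hp).1
    have hσ : descSet m σ ⊆ T.erase m :=
      (Finset.mem_filter.mp (Finset.mem_product.mp hp).2).2
    rw [Finset.mem_filter]
    refine ⟨Finset.mem_univ _, ?_⟩
    intro x hx
    rw [mem_descSet] at hx
    obtain ⟨hx1, hxn, hlt⟩ := hx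
    rcases lt_trichotomy x m with hc | hc | hc
    · have hx1m : x - 1 < m := by omega
      rw [bld_apply_lt hmn A hA σ (show (((⟨x, hxn⟩ : Fin n)) : ℕ) < m from hc),
        bld_apply_lt hmn A hA σ (show (((⟨x - 1, by omega⟩ : Fin n)) : ℕ) < m from hx1m)] at hlt
      have hσlt := (A.orderEmbOfFin hA).lt_iff_lt.mp hlt
      have hmem : x ∈ descSet m σ := mem_descSet.mpr ⟨hx1, hc, hσlt⟩
      exact (Finset.mem_erase.mp (hσ hmem)).2
    · exact hc ▸ hmT
    · exfalso
      rw [bld_apply_ge hmn A hA σ (show ¬ (((⟨x, hxn⟩ : Fin n)) : ℕ) < m by simp; omega),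
        bld_apply_ge hmn A hA σ (show ¬ (((⟨x - 1, by omega⟩ : Fin n)) : ℕ) < m by
          simp; omega)] at hlt
      have h2 := (Aᶜ.orderEmbOfFin (compl_card hA)).lt_iff_lt.mp hlt
      rw [Fin.lt_def] at h2
      simp only at h2
      omega
  case left =>
    intro π hπ
    have hπT : descSet n π ⊆ T := (Finset.mem_filter.mp hπ).2
    have step : ∀ c : ℕ, m ≤ c → ∀ hc : c + 1 < n, π ⟨c, by omega⟩ < π ⟨c + 1, hc⟩ := by
      intro c hcm hc
      by_contra hcon
      push_neg at hcon
      have hne2 : π ⟨c + 1, hc⟩ ≠ π ⟨c, by omega⟩ := fun he => by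
        have h5 := π.injective he
        rw [Fin.mk.injEq] at h5
        omega
      have hdesc : (c + 1) ∈ descSet n π :=
        mem_descSet.mpr ⟨by omega, hc, lt_of_le_of_ne hcon hne2⟩
      have := hmax _ (hπT hdesc)
      omega
    have key : ∀ d a : ℕ, m ≤ a → ∀ h : a + d + 1 < n, π ⟨a, by omega⟩ < π ⟨a + d + 1, h⟩ := by
      intro d
      induction d with
      | zero => intro a ha h; exact step a ha h
      | succ e ihe =>
        intro a ha h
        have h1 : a + e + 1 < n := by omega
        exact lt_trans (ihe a ha h1) (step (a + e + 1) (by omega) h)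
    have hmono : ∀ a b : ℕ, m ≤ a → ∀ hab : a < b, ∀ hb : b < n,
        π ⟨a, by exact lt_trans hab hb⟩ < π ⟨b, hb⟩ := by
      intro a b ha hab hb
      have hx : a + (b - a - 1) + 1 < n := by omega
      have h2 := key (b - a - 1) a ha hx
      have h3 : (⟨a + (b - a - 1) + 1, hx⟩ : Fin n) = ⟨b, hb⟩ := Fin.ext (by simp; omega)
      rwa [h3] at h2
    apply Equiv.ext
    intro i
    by_cases hi : (i : ℕ) < m
    · rw [bld_apply_lt hmn _ _ _ hi]
      have h1 := pat_spec hmn π ⟨(i : ℕ), hi⟩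
      have h2 : Fin.castLE hmn ⟨(i : ℕ), hi⟩ = i := Fin.ext rfl
      rw [h2] at h1
      exact h1
    · rw [bld_apply_ge hmn _ _ _ hi]
      have hg : ∀ j : Fin (n - m), (fun j : Fin (n - m) =>
          π ⟨m + (j : ℕ), by have := j.isLt; omega⟩) j ∈ (blk n m π)ᶜ := by
        intro j
        rw [Finset.mem_compl, mem_blk]
        simp only [Equiv.symm_apply_apply]
        omega
      have hmono' : StrictMono (fun j : Fin (n - m) =>
          π ⟨m + (j : ℕ), by have := j.isLt; omega⟩) := by
        intro j j' hjj'
        rw [Fin.lt_def] at hjj'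
        exact hmono (m + (j : ℕ)) (m + (j' : ℕ)) (by omega) (by omega) _
      have huniq := Finset.orderEmbOfFin_unique
        (s := (blk n m π)ᶜ) (compl_card (card_blk hmn π)) hg hmono'
      have h3 := congrFun huniq.symm ⟨(i : ℕ) - m, by have := i.isLt; omega⟩
      simp only at h3
      rw [h3]
      exact congrArg π (Fin.ext (by simp; omega))
  case right =>
    rintro ⟨A, σ⟩ hp
    have hA : A.card = m := Finset.mem_powersetCard_univ.mp (Finset.mem_product.mp hp).1
    have hblk : blk n m (bld hmn A hA σ) = A := by
      apply Finset.eq_of_subset_of_card_le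
      · intro v hv
        rw [blk, Finset.mem_image] at hv
        obtain ⟨i, hi, rfl⟩ := hv
        rw [mem_low] at hi
        rw [bld_apply_lt hmn A hA σ hi]
        exact Finset.orderEmbOfFin_mem A hA _
      · rw [card_blk hmn, hA]
    have hpat : pat hmn (bld hmn A hA σ) = σ := by
      apply Equiv.ext
      intro i
      apply (A.orderEmbOfFin hA).injective
      have h1 := pat_spec hmn (bld hmn A hA σ) i
      have h2 := orderEmb_congr hblk (card_blk hmn (bld hmn A hA σ)) hA
        (pat hmn (bld hmn A hA σ) i)
      rw [h2] at h1
      rw [h1]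
      have h3 : ((Fin.castLE hmn i : Fin n) : ℕ) < m := by
        simpa using i.isLt
      rw [bld_apply_lt hmn A hA σ h3]
      exact congrArg _ (congrArg σ (Fin.ext rfl))
    simp only [Prod.mk.injEq]
    exact ⟨hblk, hpat⟩


theorem alpha_odd_iff : ∀ (c n : ℕ) (T : Finset ℕ), T.card = c → T ⊆ Finset.Icc 1 (n - 1) →
    (descAlpha n T % 2 = 1 ↔
      ((∀ t ∈ T, t &&& n = t) ∧ ∀ s ∈ T, ∀ t ∈ T, s ≤ t → s &&& t = s)) := by
  intro c
  induction c using Nat.strong_induction_on with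
  | _ c ih =>
    intro n T hc hT
    rcases Finset.eq_empty_or_nonempty T with rfl | hne
    · simp [alpha_empty]
    · set m := T.max' hne with hm
      have hmT : m ∈ T := T.max'_mem hne
      have hIcc := hT hmT
      rw [Finset.mem_Icc] at hIcc
      have hmax : ∀ t ∈ T, t ≤ m := fun t ht => T.le_max' t ht
      have hT' : T.erase m ⊆ Finset.Icc 1 (m - 1) := by
        intro t ht
        rw [Finset.mem_erase] at ht
        have h2 := hT ht.2
        rw [Finset.mem_Icc] at h2
        have h3 := hmax t ht.2
        have h4 := ht.1
        rw [Finset.mem_Icc]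
        omega
      have hpos : 0 < T.card := Finset.card_pos.mpr hne
      have hcard' : (T.erase m).card < c := by
        rw [Finset.card_erase_of_mem hmT]
        omega
      rw [alpha_rec n T hT hne, mul_mod_two_eq_one, choose_odd_iff,
        ih _ hcard' m (T.erase m) rfl hT']
      constructor
      · rintro ⟨h1, h2, h3⟩
        constructor
        · intro t ht
          rcases eq_or_ne t m with heq | htm
          · rw [heq]; exact h1
          · exact sub_trans (h2 t (Finset.mem_erase.mpr ⟨htm, ht⟩)) h1
        · intro s hs t ht hst
          rcases eq_or_ne t m with heq | htm
          · rcases eq_or_ne s t with heq2 | hsm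
            · rw [heq2]; exact Nat.and_self t
            · rw [heq]
              exact h2 s (Finset.mem_erase.mpr ⟨by rw [← heq]; exact hsm, hs⟩)
          · have hsm : s ≠ m := by
              have := hmax t ht
              omega
            exact h3 s (Finset.mem_erase.mpr ⟨hsm, hs⟩) t (Finset.mem_erase.mpr ⟨htm, ht⟩) hst
      · rintro ⟨h1, h2⟩
        refine ⟨h1 m hmT, ?_, ?_⟩
        · intro t ht
          rw [Finset.mem_erase] at ht
          exact h2 t ht.2 m hmT (hmax t ht.2)
        · intro s hs t ht hst
          rw [Finset.mem_erase] at hs ht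
          exact h2 s hs.2 t ht.2 hst

theorem alpha_eq_sum_beta (n : ℕ) (S : Finset ℕ) :
    descAlpha n S = ∑ T ∈ S.powerset, descBeta n T := by
  classical
  rw [descAlpha]
  rw [Finset.card_eq_sum_card_fiberwise (f := descSet n) (t := S.powerset)
    (fun π hπ => Finset.mem_powerset.mpr (Finset.mem_filter.mp hπ).2)]
  apply Finset.sum_congr rfl
  intro T hT
  rw [descBeta]
  congr 1
  ext π
  simp only [Finset.mem_filter, Finset.mem_univ, true_and]
  constructor
  · rintro ⟨h1, h2⟩
    exact h2
  · intro h
    exact ⟨h ▸ Finset.mem_powerset.mp hT, h⟩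

theorem beta_zmod (n : ℕ) (S : Finset ℕ) :
    (descBeta n S : ZMod 2) = ∑ T ∈ S.powerset, (descAlpha n T : ZMod 2) := by
  classical
  have hstep : ∀ T ∈ S.powerset, (descAlpha n T : ZMod 2)
      = ∑ U ∈ T.powerset, (descBeta n U : ZMod 2) := by
    intro T _
    rw [alpha_eq_sum_beta]
    push_cast
    rfl
  rw [Finset.sum_congr rfl hstep]
  rw [Finset.sum_comm' (s := S.powerset) (t := fun T => T.powerset) (t' := S.powerset)
    (s' := fun U => Finset.Icc U S) (by
      intro T U
      simp only [Finset.mem_powerset, Finset.mem_Icc, Finset.le_iff_subset]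
      constructor
      · rintro ⟨h1, h2⟩
        exact ⟨⟨h2, h1⟩, h2.trans h1⟩
      · rintro ⟨⟨h2, h1⟩, _⟩
        exact ⟨h1, h2⟩)]
  have hinner : ∀ U ∈ S.powerset, (∑ _T ∈ Finset.Icc U S, (descBeta n U : ZMod 2))
      = (2 : ZMod 2) ^ (S.card - U.card) * (descBeta n U : ZMod 2) := by
    intro U hU
    rw [Finset.sum_const, Finset.card_Icc_finset (Finset.mem_powerset.mp hU), nsmul_eq_mul]
    push_cast
    ring
  rw [Finset.sum_congr rfl hinner]
  rw [Finset.sum_eq_single S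
    (by
      intro U hU hUS
      have h1 : U ⊂ S := Finset.ssubset_iff_subset_ne.mpr ⟨Finset.mem_powerset.mp hU, hUS⟩
      have h2 : U.card < S.card := Finset.card_lt_card h1
      have h3 : (2 : ZMod 2) = 0 := by decide
      rw [h3, zero_pow (by omega : S.card - U.card ≠ 0), zero_mul])
    (fun hS => absurd (Finset.mem_powerset.mpr (subset_refl S)) hS)]
  rw [Nat.sub_self, pow_zero, one_mul]


end DescParity

open DescParity

/-- If `n` has `k` ones in binary, `E = {e₁ < … < e_{2^k-1}}` is the set of essential
elements of `[n-1]`, `S ⊆ E`, and `Ŝ` is the set of (1-based) indices of the elements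
of `S` in `E`, then `β_n(S) ≡ β_{2^k-1}(Ŝ) (mod 2)`. -/
theorem stmt_6 (n k : ℕ) (hk : (Nat.bits n).count true = k)
    (E : Finset ℕ) (hE : E = (Finset.Icc 1 (n - 1)).filter (Essential n))
    (S : Finset ℕ) (hS : S ⊆ E)
    (l : List ℕ) (hl : l = E.sort (· ≤ ·))
    (hatS : Finset ℕ)
    (hhatS : hatS = ((Finset.range l.length).filter
      (fun i => l.getD i 0 ∈ S)).image (· + 1)) :
    descBeta n S ≡ descBeta (2 ^ k - 1) hatS [MOD 2] := by
    classical
  have h2k : 1 ≤ 2 ^ k := Nat.one_le_two_pow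
  have hself : cmprs n n = 2 ^ k - 1 := by rw [cmprs_self n, hk]
  have ess : ∀ s ∈ E, 0 < s ∧ s < n ∧ s &&& n = s := by
    intro s hs
    rw [hE, Finset.mem_filter] at hs
    exact hs.2
  have himg : E.image (cmprs n) = Finset.Icc 1 (2 ^ k - 2) := by
    ext x
    simp only [Finset.mem_image, Finset.mem_Icc]
    constructor
    · rintro ⟨s, hs, rfl⟩
      obtain ⟨h0, h1n, hsub⟩ := ess s hs
      have hlt1 : cmprs n 0 < cmprs n s := (cmprs_lt_iff n 0 s (Nat.zero_and n) hsub).mpr h0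
      rw [cmprs_zero_right] at hlt1
      have hlt2 : cmprs n s < cmprs n n := (cmprs_lt_iff n s n hsub (Nat.and_self n)).mpr h1n
      rw [hself] at hlt2
      omega
    · rintro ⟨hx1, hx2⟩
      obtain ⟨s, hsub, hcs⟩ := cmprs_surj n x (by rw [hself]; omega)
      refine ⟨s, ?_, hcs⟩
      have h0 : s ≠ 0 := by
        rintro rfl
        rw [cmprs_zero_right] at hcs
        omega
      have hn' : s ≠ n := by
        rintro rfl
        rw [hself] at hcs
        omega
      have hsle : s ≤ n := sub_le hsub
      rw [hE, Finset.mem_filter, Finset.mem_Icc]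
      exact ⟨⟨by omega, by omega⟩, by omega, by omega, hsub⟩
  have hinjE : ∀ a ∈ E, ∀ b ∈ E, cmprs n a = cmprs n b → a = b := by
    intro a ha b hb hab
    exact cmprs_inj (ess a ha).2.2 (ess b hb).2.2 hab
  have hcardE : E.card = 2 ^ k - 2 := by
    have h1 : (E.image (cmprs n)).card = E.card :=
      Finset.card_image_of_injOn (fun a ha b hb => hinjE a ha b hb)
    rw [himg, Nat.card_Icc] at h1
    omega
  have hlen : l.length = 2 ^ k - 2 := by rw [hl, Finset.length_sort, hcardE]
  have hIccCard : (Finset.Icc 1 (2 ^ k - 2)).card = 2 ^ k - 2 := by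
    rw [Nat.card_Icc]; omega
  have hidx : ∀ i (hi : i < l.length), cmprs n (l[i]) = i + 1 := by
    have hf : ∀ j : Fin (2 ^ k - 2),
        cmprs n (E.orderEmbOfFin hcardE j) ∈ Finset.Icc 1 (2 ^ k - 2) := by
      intro j
      rw [← himg]
      exact Finset.mem_image_of_mem _ (Finset.orderEmbOfFin_mem E hcardE j)
    have hmono : StrictMono (fun j : Fin (2 ^ k - 2) => cmprs n (E.orderEmbOfFin hcardE j)) := by
      intro a b hab
      have h1 := (E.orderEmbOfFin hcardE).strictMono hab
      exact (cmprs_lt_iff n _ _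
        (ess _ (Finset.orderEmbOfFin_mem E hcardE a)).2.2
        (ess _ (Finset.orderEmbOfFin_mem E hcardE b)).2.2).mpr h1
    have hu1 := Finset.orderEmbOfFin_unique hIccCard
      (f := fun j : Fin (2 ^ k - 2) => cmprs n (E.orderEmbOfFin hcardE j)) hf hmono
    have hg : ∀ j : Fin (2 ^ k - 2), ((j : ℕ) + 1) ∈ Finset.Icc 1 (2 ^ k - 2) := by
      intro j
      have := j.isLt
      rw [Finset.mem_Icc]
      omega
    have hu2 := Finset.orderEmbOfFin_unique hIccCard
      (f := fun j : Fin (2 ^ k - 2) => (j : ℕ) + 1) hg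
      (fun a b hab => by simpa using Nat.add_lt_add_right (Fin.lt_def.mp hab) 1)
    intro i hi
    have hi' : i < 2 ^ k - 2 := by rwa [hlen] at hi
    have e1 := congrFun hu1 ⟨i, hi'⟩
    have e2 := congrFun hu2 ⟨i, hi'⟩
    simp only at e1 e2
    have e3 : E.orderEmbOfFin hcardE ⟨i, hi'⟩ = l[i] := by
      rw [Finset.orderEmbOfFin_apply]
      simp only [hl, Fin.getElem_fin]
    rw [e3] at e1
    rw [e1, ← e2]
  have hhat : hatS = S.image (cmprs n) := by
    rw [hhatS]
    ext x
    simp only [Finset.mem_image, Finset.mem_filter, Finset.mem_range]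
    constructor
    · rintro ⟨i, ⟨hi, hiS⟩, rfl⟩
      rw [List.getD_eq_getElem l 0 hi] at hiS
      exact ⟨l[i], hiS, hidx i hi⟩
    · rintro ⟨s, hsS, rfl⟩
      have hsl : s ∈ l := by
        rw [hl]
        exact (Finset.mem_sort _).mpr (hS hsS)
      obtain ⟨i, hi, rfl⟩ := List.mem_iff_getElem.mp hsl
      exact ⟨i, ⟨hi, by rw [List.getD_eq_getElem l 0 hi]; exact hsS⟩, (hidx i hi).symm⟩
  apply (ZMod.natCast_eq_natCast_iff _ _ 2).mp
  rw [beta_zmod, beta_zmod]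
  refine Finset.sum_nbij' (i := fun T => T.image (cmprs n))
    (j := fun T' => S.filter (fun s => cmprs n s ∈ T')) ?_ ?_ ?_ ?_ ?_
  · intro T hT
    rw [Finset.mem_powerset] at hT ⊢
    rw [hhat]
    exact Finset.image_subset_image hT
  · intro T' _
    exact Finset.mem_powerset.mpr (Finset.filter_subset _ _)
  · intro T hT
    rw [Finset.mem_powerset] at hT
    ext s
    simp only [Finset.mem_filter, Finset.mem_image]
    constructor
    · rintro ⟨hsS, t, htT, hts⟩
      have heq : t = s := hinjE t (hS (hT htT)) s (hS hsS) hts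
      rw [← heq]
      exact htT
    · intro hsT
      exact ⟨hT hsT, s, hsT, rfl⟩
  · intro T' hT'
    rw [Finset.mem_powerset] at hT'
    ext x
    simp only [Finset.mem_image, Finset.mem_filter]
    constructor
    · rintro ⟨s, ⟨_, hcs⟩, rfl⟩
      exact hcs
    · intro hxT'
      have hxhat := hT' hxT'
      rw [hhat] at hxhat
      obtain ⟨s, hsS, rfl⟩ := Finset.mem_image.mp hxhat
      exact ⟨s, ⟨hsS, hxT'⟩, rfl⟩
  · intro T hTp
    have hTs : T ⊆ S := Finset.mem_powerset.mp hTp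
    have hTE : T ⊆ E := hTs.trans hS
    have hTIcc : T ⊆ Finset.Icc 1 (n - 1) := by
      intro t ht
      have := hTE ht
      rw [hE, Finset.mem_filter] at this
      exact this.1
    have hT'Icc : T.image (cmprs n) ⊆ Finset.Icc 1 (2 ^ k - 1 - 1) := by
      rw [show 2 ^ k - 1 - 1 = 2 ^ k - 2 by omega, ← himg]
      exact Finset.image_subset_image hTE
    have h1 := alpha_odd_iff T.card n T rfl hTIcc
    have h2 := alpha_odd_iff (T.image (cmprs n)).card (2 ^ k - 1) (T.image (cmprs n)) rfl hT'Icc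
    have hbound : ∀ t ∈ T, cmprs n t ∈ Finset.Icc 1 (2 ^ k - 2) := by
      intro t ht
      rw [← himg]
      exact Finset.mem_image_of_mem _ (hTE ht)
    have hcond : ((∀ t ∈ T, t &&& n = t) ∧ ∀ s ∈ T, ∀ t ∈ T, s ≤ t → s &&& t = s)
        ↔ ((∀ t' ∈ T.image (cmprs n), t' &&& (2 ^ k - 1) = t') ∧
          ∀ s' ∈ T.image (cmprs n), ∀ t' ∈ T.image (cmprs n), s' ≤ t' → s' &&& t' = s') := by
      constructor
      · rintro ⟨-, hchain⟩
        constructor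
        · intro t' ht'
          obtain ⟨t, htT, rfl⟩ := Finset.mem_image.mp ht'
          apply lt_two_pow_land
          have := Finset.mem_Icc.mp (hbound t htT)
          omega
        · intro s' hs' t' ht' hle
          obtain ⟨s, hsT, rfl⟩ := Finset.mem_image.mp hs'
          obtain ⟨t, htT, rfl⟩ := Finset.mem_image.mp ht'
          have hsub1 := (ess s (hTE hsT)).2.2
          have hsub2 := (ess t (hTE htT)).2.2
          have hsle : s ≤ t := by
            by_contra hcon
            push_neg at hcon
            have := (cmprs_lt_iff n t s hsub2 hsub1).mpr hcon
            omega
          rw [← cmprs_land n s t hsub1 hsub2, hchain s hsT t htT hsle]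
      · rintro ⟨-, hchain'⟩
        refine ⟨fun t ht => (ess t (hTE ht)).2.2, ?_⟩
        intro s hs t ht hst
        have hsub1 := (ess s (hTE hs)).2.2
        have hsub2 := (ess t (hTE ht)).2.2
        have hle' : cmprs n s ≤ cmprs n t := by
          rcases eq_or_lt_of_le hst with heq | hlt
          · rw [heq]
          · exact le_of_lt ((cmprs_lt_iff n s t hsub1 hsub2).mpr hlt)
        have h5 := hchain' (cmprs n s) (Finset.mem_image_of_mem _ hs)
          (cmprs n t) (Finset.mem_image_of_mem _ ht) hle'
        rw [← cmprs_land n s t hsub1 hsub2] at h5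
        have h6 : (s &&& t) &&& n = s &&& t := by
          rw [Nat.land_assoc, hsub2]
        exact cmprs_inj h6 hsub1 h5
    have hmod : descAlpha n T % 2 = descAlpha (2 ^ k - 1) (T.image (cmprs n)) % 2 := by
      by_cases hP : ((∀ t ∈ T, t &&& n = t) ∧ ∀ s ∈ T, ∀ t ∈ T, s ≤ t → s &&& t = s)
      · rw [h1.mpr hP, h2.mpr (hcond.mp hP)]
      · have e1 : descAlpha n T % 2 ≠ 1 := fun hx => hP (h1.mp hx)
        have e2 : descAlpha (2 ^ k - 1) (T.image (cmprs n)) % 2 ≠ 1 :=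
          fun hx => hP (hcond.mpr (h2.mp hx))
        omega
    exact (ZMod.natCast_eq_natCast_iff _ _ 2).mpr hmod
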